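/- Let (C_1,...,C_t) be a circuit decomposition of a matroid M with rank function r, and set D_j = C_1 ∪ ... ∪ C_j and lobes C̃_j = C_j − D_{j−1}. Then r(D_j) − r(D_{j−1}) = |C̃_j| − 1 for all 1 ≤ j ≤ t. -/

import Mathlib

open Set


/-- The rank of a set in a matroid: the size of a largest independent subset. -/
noncomputable def Matroid.rankOf {α : Type*} (M : Matroid α) (X : Set α) : ℕ :=
  sSup {n | ∃ I, I ⊆ X ∧ M.Indep I ∧ I.ncard = n}

/-- A circuit of a matroid is a minimal dependent set. -/
def Matroid.IsCircuitSet {α : Type*} (M : Matroid α) (C : Set α) : Prop :=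
  M.Dep C ∧ ∀ D ⊂ C, M.Indep D

/-- `D j = C 0 ∪ ⋯ ∪ C (j-1)`, the union of the first `j` circuits of a sequence. -/
def circUnion {α : Type*} (C : ℕ → Set α) (j : ℕ) : Set α := ⋃ i < j, C i

/-- `(C 0, …, C (t-1))` is a partial circuit decomposition of `M`: every `C i` is a
circuit, and for `i ≥ 1` the lobe `C i \ D i` is nonempty (E1) and inclusionwise minimal
among the lobes of circuits having a nonempty lobe (E2). -/
def Matroid.IsPartialCircDecomp {α : Type*} (M : Matroid α) (C : ℕ → Set α) (t : ℕ) : Prop :=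
  (∀ i < t, M.IsCircuitSet (C i)) ∧
  ∀ i, 1 ≤ i → i < t →
    C i \ circUnion C i ≠ ∅ ∧
    ∀ C', M.IsCircuitSet C' → C' \ circUnion C i ≠ ∅ →
      ¬ (C' \ circUnion C i ⊂ C i \ circUnion C i)

/-- A circuit decomposition is a partial circuit decomposition covering the ground set. -/
def Matroid.IsCircDecomp {α : Type*} (M : Matroid α) (C : ℕ → Set α) (t : ℕ) : Prop :=
  M.IsPartialCircDecomp C t ∧ circUnion C t = M.E

/-- A matroid is bridgeless if every element of the ground set lies in a circuit. -/
def Matroid.Bridgeless {α : Type*} (M : Matroid α) : Prop :=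
  ∀ e ∈ M.E, ∃ C, M.IsCircuitSet C ∧ e ∈ C

section Aux

variable {α : Type*} {M : Matroid α} {C I J X D : Set α} {x : α}

lemma Matroid.IsCircuitSet.subset_ground (h : M.IsCircuitSet C) : C ⊆ M.E :=
  h.1.subset_ground

lemma Matroid.IsCircuitSet.diff_singleton_indep (h : M.IsCircuitSet C) (hx : x ∈ C) :
    M.Indep (C \ {x}) :=
  h.2 _ (Set.sdiff_singleton_ssubset.2 hx)

lemma Matroid.IsCircuitSet.mem_closure_diff (h : M.IsCircuitSet C) (hx : x ∈ C) :
    x ∈ M.closure (C \ {x}) := by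
  have hi := h.diff_singleton_indep hx
  have hd : M.Dep (insert x (C \ {x})) := by
    rw [insert_diff_singleton, insert_eq_self.2 hx]; exact h.1
  exact (hi.insert_dep_iff.1 hd).1

lemma exists_circuitSet_subset_aux :
    ∀ n (D : Set α), D.Finite → D.ncard = n → M.Dep D →
      ∃ C', M.IsCircuitSet C' ∧ C' ⊆ D := by
  intro n
  induction n using Nat.strong_induction_on with
  | _ n ih =>
    intro D hfin hcard hD
    by_cases h : ∀ D' ⊂ D, M.Indep D'
    · exact ⟨D, ⟨hD, h⟩, Subset.rfl⟩
    push_neg at h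
    obtain ⟨D', hss, hni⟩ := h
    obtain ⟨C', hC', hsub⟩ := ih D'.ncard (hcard ▸ Set.ncard_lt_ncard hss hfin) D'
      (hfin.subset hss.subset) rfl ⟨hni, hss.subset.trans hD.subset_ground⟩
    exact ⟨C', hC', hsub.trans hss.subset⟩

lemma exists_circuitSet_subset (hD : M.Dep D) (hfin : D.Finite) :
    ∃ C', M.IsCircuitSet C' ∧ C' ⊆ D :=
  exists_circuitSet_subset_aux D.ncard D hfin rfl hD

lemma Matroid.IsBasis.ncard_eq_ncard_basis (hI : M.IsBasis I X) (hJ : M.IsBasis J X) :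
    I.ncard = J.ncard :=
  hI.isBase_restrict.ncard_eq_ncard_of_isBase hJ.isBase_restrict

lemma Matroid.rankOf_eq_ncard_of_basis [M.Finite] (hI : M.IsBasis I X) :
    M.rankOf X = I.ncard := by
  have hub : ∀ n ∈ {n | ∃ J, J ⊆ X ∧ M.Indep J ∧ J.ncard = n}, n ≤ I.ncard := by
    rintro n ⟨J, hJX, hJ, rfl⟩
    obtain ⟨J', hJ', hJJ'⟩ := hJ.subset_isBasis_of_subset hJX hI.subset_ground
    have : J.ncard ≤ J'.ncard :=
      Set.ncard_le_ncard hJJ' (M.set_finite J' hJ'.indep.subset_ground)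
    exact this.trans_eq (hJ'.ncard_eq_ncard_basis hI)
  exact le_antisymm (csSup_le ⟨I.ncard, I, hI.subset, hI.indep, rfl⟩ hub)
    (le_csSup ⟨I.ncard, hub⟩ ⟨I, hI.subset, hI.indep, rfl⟩)

end Aux

/-- **Lobe–rank identity.** In a circuit decomposition `(C 0, …, C (t-1))` of a finite
matroid, `r(D_{j+1}) - r(D_j) = |C̃_{j+1}| - 1` for the lobe `C̃_{j+1} = C j \ D j`
(stated additively to avoid truncated subtraction). -/


theorem circDecomp_lobe_rank {α : Type*} (M : Matroid α) [M.Finite]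
    (C : ℕ → Set α) (t : ℕ) (hC : M.IsCircDecomp C t) :
    ∀ j < t, M.rankOf (circUnion C (j + 1)) + 1 =
      M.rankOf (circUnion C j) + (C j \ circUnion C j).ncard := by
  intro j hj
  obtain ⟨⟨hcirc, hmin⟩, -⟩ := hC
  set D := circUnion C j with hD
  set L := C j \ D with hL
  have hCj : M.IsCircuitSet (C j) := hcirc j hj
  have hDE : D ⊆ M.E := by
    rw [hD, circUnion]
    exact iUnion₂_subset fun i hi => (hcirc i (hi.trans hj)).subset_ground
  have hLE : L ⊆ M.E := diff_subset.trans hCj.subset_ground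
  have hLfin : L.Finite := M.set_finite L hLE
  have hDL : Disjoint D L := disjoint_sdiff_right
  -- (E1), including the case j = 0
  have hLne : L.Nonempty := by
    rcases Nat.eq_zero_or_pos j with rfl | hj1
    · have hDe : D = ∅ := by simp [hD, circUnion]
      rw [hL, hDe, diff_empty]
      exact hCj.1.nonempty
    · exact nonempty_iff_ne_empty.2 (hmin j hj1 hj).1
  -- (E2), including the case j = 0
  have hE2 : ∀ C', M.IsCircuitSet C' → C' \ D ≠ ∅ → ¬ (C' \ D ⊂ L) := by
    rcases Nat.eq_zero_or_pos j with rfl | hj1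
    · intro C' hC' hne hss
      have hDe : D = ∅ := by simp [hD, circUnion]
      rw [hL, hDe, diff_empty, diff_empty] at hss
      exact hC'.1.not_indep (hCj.2 C' hss)
    · exact fun C' h1 h2 => (hmin j hj1 hj).2 C' h1 h2
  -- a basis I of D extended to a basis B of D ∪ L
  obtain ⟨I, hI⟩ := M.exists_isBasis D hDE
  obtain ⟨B, hB, hIB⟩ := hI.indep.subset_isBasis_of_subset
    (hI.subset.trans subset_union_left) (union_subset hDE hLE)
  have hBfin : B.Finite := M.set_finite B hB.indep.subset_ground
  have hIfin : I.Finite := hBfin.subset hIB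
  have hBD : B ∩ D = I :=
    (hI.eq_of_subset_indep (hB.indep.inter_right D) (subset_inter hIB hI.subset)
      inter_subset_right).symm
  have hBdiff : B \ I ⊆ L := by
    intro b hb
    rcases hB.subset hb.1 with hbD | hbL
    · exact absurd (hBD ▸ ⟨hb.1, hbD⟩) hb.2
    · exact hbL
  -- there is an element of L not in B
  have hLnB : (L \ B).Nonempty := by
    by_contra h
    have hLB : L ⊆ B := by
      rwa [not_nonempty_iff_eq_empty, diff_eq_empty] at h
    obtain ⟨x, hx⟩ := hLne
    have hxB : x ∈ B := hLB hx
    have hxI : x ∉ I := fun hxI => hx.2 (hI.subset hxI)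
    have h1 : C j \ {x} ⊆ M.closure (B \ {x}) := by
      intro z hz
      by_cases hzD : z ∈ D
      · exact M.closure_subset_closure (subset_diff_singleton hIB hxI)
          (hI.subset_closure hzD)
      · have hzB : z ∈ B \ {x} := ⟨hLB ⟨hz.1, hzD⟩, hz.2⟩
        exact M.mem_closure_of_mem hzB (diff_subset.trans hB.indep.subset_ground)
    have h2 : x ∈ M.closure (B \ {x}) :=
      M.closure_subset_closure_of_subset_closure h1 (hCj.mem_closure_diff hx.1)
    exact hB.indep.notMem_closure_sdiff_of_mem hxB h2
  -- L \ B has exactly one element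
  have hone : ∀ x ∈ L \ B, ∀ y ∈ L \ B, x = y := by
    intro x hx y hy
    by_contra hne
    have hxcl : x ∈ M.closure B := hB.subset_closure (Or.inr hx.1)
    have hdep : M.Dep (insert x B) := hB.indep.insert_dep_iff.2 ⟨hxcl, hx.2⟩
    obtain ⟨C', hC', hsub⟩ := exists_circuitSet_subset hdep (hBfin.insert x)
    have hxC' : x ∈ C' := by
      by_contra hxC'
      have hCB : C' ⊆ B := fun z hz =>
        ((hsub hz).resolve_left (fun h => hxC' (h ▸ hz)))
      exact hC'.1.not_indep (hB.indep.subset hCB)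
    have hxD : x ∉ D := hx.1.2
    have hne' : C' \ D ≠ ∅ :=
      nonempty_iff_ne_empty.1 ⟨x, hxC', hxD⟩
    refine hE2 C' hC' hne' ?_
    have hsubL : C' \ D ⊆ L := by
      intro z hz
      rcases hsub hz.1 with rfl | hzB
      · exact hx.1
      · exact (hB.subset hzB).resolve_left hz.2
    refine (ssubset_iff_of_subset hsubL).2 ⟨y, hy.1, ?_⟩
    intro hyC'
    rcases hsub hyC'.1 with h | h
    · exact hne (h.symm)
    · exact hy.2 h
  obtain ⟨y, hy⟩ := hLnB
  have hLBsing : L \ B = {y} :=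
    eq_singleton_iff_unique_mem.2 ⟨hy, fun z hz => hone z hz y hy⟩
  -- counting
  have hBL : L ∩ B = B \ I := by
    apply Subset.antisymm
    · intro b hb
      exact ⟨hb.2, fun hbI => disjoint_left.1 hDL (hI.subset hbI) hb.1⟩
    · intro b hb
      exact ⟨hBdiff hb, hb.1⟩
  have hLcount : (L ∩ B).ncard + (L \ B).ncard = L.ncard :=
    Set.ncard_inter_add_ncard_diff_eq_ncard L B hLfin
  have hBcount : (B \ I).ncard + I.ncard = B.ncard :=
    Set.ncard_diff_add_ncard_of_subset hIB hBfin
  have hset : circUnion C (j + 1) = D ∪ L := by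
    rw [hL, union_diff_self, hD, circUnion, circUnion, Set.biUnion_lt_succ]
  rw [hset, M.rankOf_eq_ncard_of_basis hB, M.rankOf_eq_ncard_of_basis hI]
  rw [hLBsing, ncard_singleton] at hLcount
  rw [hBL] at hLcount
  omega
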